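/- Let S = ℕ̄ × ℤ, where ℕ̄ = ℕ ∪ {∞} is the extended natural numbers, with componentwise addition, and define a relation on S by (g, k) ⊑ (h, l) if and only if g ≤ h in ℕ̄ and k = l in ℤ. Then: (a) ⊑ is a partial order on S compatible with addition (x ⊑ y implies x + z ⊑ y + z for all z); (b) S is positively directed: for every x ∈ S there exists p ∈ S with 0 ⊑ x + p; (c) S is positively convex: for all x, y ∈ S, if 0 ⊑ y and x ⊑ y then 0 ⊑ x + y; (d) the set {x ∈ S : there exists y ∈ S with x + y = 0} equals {(g, k) ∈ S : g = 0} = {0} × ℤ, which strictly contains {0}; in particular the positive cone with respect to ⊑ is ℕ̄ × {0}. -/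

import Mathlib

/-- The example `S = ℕ̄ × ℤ` with componentwise addition and the relation
`(g, k) ⊑ (h, l) ↔ g ≤ h ∧ k = l`:
(a) `⊑` is a partial order compatible with addition;
(b) `S` is positively directed;
(c) `S` is positively convex;
(d) the set of additively invertible elements is `{0} × ℤ`, which strictly
contains `{0}`, and the positive cone of `⊑` is `ℕ̄ × {0}`. -/
theorem stmt12 (r : ℕ∞ × ℤ → ℕ∞ × ℤ → Prop)
    (hr : ∀ x y : ℕ∞ × ℤ, r x y ↔ (x.1 ≤ y.1 ∧ x.2 = y.2)) :
    -- (a) partial order, compatible with addition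
    (∀ x, r x x) ∧
    (∀ x y, r x y → r y x → x = y) ∧
    (∀ x y z, r x y → r y z → r x z) ∧
    (∀ x y z, r x y → r (x + z) (y + z)) ∧
    -- (b) positively directed
    (∀ x, ∃ p, r 0 (x + p)) ∧
    -- (c) positively convex
    (∀ x y, r 0 y → r x y → r 0 (x + y)) ∧
    -- (d) invertible elements form {0} × ℤ, strictly larger than {0};
    --     the positive cone is ℕ̄ × {0}
    ({x : ℕ∞ × ℤ | ∃ y, x + y = 0} = {x : ℕ∞ × ℤ | x.1 = 0}) ∧
    (({0} : Set (ℕ∞ × ℤ)) ⊂ {x : ℕ∞ × ℤ | ∃ y, x + y = 0}) ∧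
    ({x : ℕ∞ × ℤ | r 0 x} = {x : ℕ∞ × ℤ | x.2 = 0}) := by
  simp only [hr]
  refine ⟨fun x => ⟨le_rfl, by trivial⟩,
    fun x y ⟨h1,h2⟩ ⟨h3,_⟩ => Prod.ext (le_antisymm h1 h3) h2,
    fun x y z ⟨h1,h2⟩ ⟨h3,h4⟩ => ⟨h1.trans h3, h2.trans h4⟩,
    fun x y z ⟨h1,h2⟩ => ⟨add_le_add_left h1 _, by simp [h2]⟩,
    fun x => ⟨(0, -x.2), ⟨zero_le, by simp⟩⟩,
    fun x y ⟨h1,h2⟩ ⟨h3,h4⟩ => ⟨zero_le, by simp only [Prod.snd_add, Prod.snd_zero] at *; omega⟩,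
    ?_, ?_, ?_⟩
  · ext x
    constructor
    · rintro ⟨y, hy⟩
      have h1 : x.1 + y.1 = 0 := congrArg Prod.fst hy
      exact (add_eq_zero.mp h1).1
    · intro h
      exact ⟨(0, -x.2), Prod.ext (by simp [Prod.fst_add, show x.1 = 0 from h]) (by simp)⟩
  · constructor
    · rintro x rfl
      exact ⟨0, by simp⟩
    · intro h
      have := h (Set.mem_setOf.mpr ⟨(0, -1), by simp⟩ : ((0:ℕ∞), (1:ℤ)) ∈ _)
      simp at this
  · ext x
    simp only [Set.mem_setOf_eq]
    constructor
    · rintro ⟨-, h⟩; exact h.symm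
    · intro h; exact ⟨zero_le, h.symm⟩
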